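/- Let λ₁, λ₂, λ₃ ∈ ℝ and let f(ξ) = λ₁/(2·(λ₃ − λ₂·ξ)). Then the quadratic function I₂(J₊, J₋, J₃) = λ₃·(J₊ + J₋) − λ₁·J₃ − λ₂·J₃² is invariant under the sl₂ evolution map Φ_f: for every (J₊, J₋, J₃) ∈ ℝ³ with λ₃ − λ₂·J₋ ≠ 0, one has I₂(Φ_f(J₊, J₋, J₃)) = I₂(J₊, J₋, J₃). -/

import Mathlib

/-- The sl₂ evolution map associated to a function `f : ℝ → ℝ`. -/
noncomputable def Phi (f : ℝ → ℝ) : ℝ × ℝ × ℝ → ℝ × ℝ × ℝ :=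
  fun J => (J.2.1,
            J.1 - 4 * J.2.2 * f J.2.1 + 4 * J.2.1 * (f J.2.1) ^ 2,
            -J.2.2 + 2 * J.2.1 * f J.2.1)

theorem I2_invariant (lam₁ lam₂ lam₃ : ℝ) (Jp Jm J3 : ℝ)
    (hden : lam₃ - lam₂ * Jm ≠ 0) :
    lam₃ * ((Phi (fun ξ => lam₁ / (2 * (lam₃ - lam₂ * ξ))) (Jp, Jm, J3)).1
        + (Phi (fun ξ => lam₁ / (2 * (lam₃ - lam₂ * ξ))) (Jp, Jm, J3)).2.1)
      - lam₁ * (Phi (fun ξ => lam₁ / (2 * (lam₃ - lam₂ * ξ))) (Jp, Jm, J3)).2.2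
      - lam₂ * ((Phi (fun ξ => lam₁ / (2 * (lam₃ - lam₂ * ξ))) (Jp, Jm, J3)).2.2) ^ 2
      = lam₃ * (Jp + Jm) - lam₁ * J3 - lam₂ * J3 ^ 2 := by
  simp only [Phi]
  have hden' : lam₃ - Jm * lam₂ ≠ 0 := by rwa [mul_comm]
  field_simp
  ring
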